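/- Let (z, z') ∈ C². The quantity 1/(Γ(z−k)Γ(z'−k)) is a nonnegative real number for every integer k if and only if either (i) z' = conjugate of z and z is non-real, or (ii) z, z' are real and there is an integer m with m < z < m+1 and m < z' < m+1, or (iii) one of z, z' equals some integer m and the other is a real number greater than m−1. -/

import Mathlib

private lemma gamma_neg_aux {u : ℝ} (h1 : -1 < u) (h2 : u < 0) : Real.Gamma u < 0 := by
  have h0 : Real.Gamma (u + 1) = u * Real.Gamma u := Real.Gamma_add_one h2.ne
  have hp : 0 < Real.Gamma (u + 1) := Real.Gamma_pos_of_pos (by linarith)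
  nlinarith

private lemma gamma_prod_pos_aux : ∀ t : ℤ, ∀ u v : ℝ, (t : ℝ) < u → u < t + 1 →
    (t : ℝ) < v → v < t + 1 → 0 < Real.Gamma u * Real.Gamma v := by
  intro t
  induction t using Int.induction_on with
  | zero =>
    intro u v h1 h2 h3 h4
    push_cast at h1 h3
    exact mul_pos (Real.Gamma_pos_of_pos h1) (Real.Gamma_pos_of_pos h3)
  | succ n ih =>
    intro u v h1 h2 h3 h4
    push_cast at h1 h3
    have hn : (0:ℝ) ≤ n := Nat.cast_nonneg n
    exact mul_pos (Real.Gamma_pos_of_pos (by linarith)) (Real.Gamma_pos_of_pos (by linarith))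
  | pred n ih =>
    intro u v h1 h2 h3 h4
    push_cast at h1 h2 h3 h4
    have hn : (0:ℝ) ≤ n := Nat.cast_nonneg n
    have hu0 : u < 0 := by linarith
    have hv0 : v < 0 := by linarith
    have ihuv := ih (u + 1) (v + 1) (by push_cast; linarith) (by push_cast; linarith)
      (by push_cast; linarith) (by push_cast; linarith)
    rw [Real.Gamma_add_one hu0.ne, Real.Gamma_add_one hv0.ne] at ihuv
    have huv : 0 < u * v := mul_pos_of_neg_of_neg hu0 hv0
    nlinarith

private lemma contra_helper (x y : ℝ)
    (HR : ∀ k : ℤ, 0 ≤ Real.Gamma (x - k) * Real.Gamma (y - k))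
    (hy : y ≠ (⌊y⌋ : ℝ)) (hx : (⌊y⌋ : ℝ) + 1 < x) : False := by
  have h1 : -1 < y - (⌊y⌋ + 1 : ℤ) := by
    push_cast
    have := lt_of_le_of_ne (Int.floor_le y) (Ne.symm hy)
    linarith
  have h2 : y - (⌊y⌋ + 1 : ℤ) < 0 := by
    push_cast
    have := Int.lt_floor_add_one y
    linarith
  have hg1 := gamma_neg_aux h1 h2
  have hg2 : 0 < Real.Gamma (x - (⌊y⌋ + 1 : ℤ)) := Real.Gamma_pos_of_pos (by push_cast; linarith)
  nlinarith [HR (⌊y⌋ + 1)]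

private lemma real_forward (x y : ℝ)
    (HR : ∀ k : ℤ, 0 ≤ Real.Gamma (x - k) * Real.Gamma (y - k)) :
    (∃ m : ℤ, (m : ℝ) < x ∧ x < m + 1 ∧ (m : ℝ) < y ∧ y < m + 1) ∨
    (∃ m : ℤ, (x = m ∧ (m : ℝ) - 1 < y) ∨ (y = m ∧ (m : ℝ) - 1 < x)) := by
  have HR' : ∀ k : ℤ, 0 ≤ Real.Gamma (y - k) * Real.Gamma (x - k) := fun k => by
    rw [mul_comm]; exact HR k
  by_cases hxi : ∃ m : ℤ, x = (m : ℝ)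
  · obtain ⟨m, rfl⟩ := hxi
    by_cases hyi : ∃ m' : ℤ, y = (m' : ℝ)
    · obtain ⟨m', rfl⟩ := hyi
      rcases le_or_gt m m' with h | h
      · refine Or.inr ⟨m, Or.inl ⟨rfl, ?_⟩⟩
        have : (m : ℝ) ≤ m' := by exact_mod_cast h
        linarith
      · exact Or.inr ⟨m', Or.inr ⟨rfl, by
          have : (m' : ℝ) < m := by exact_mod_cast h
          linarith⟩⟩
    · push_neg at hyi
      refine Or.inr ⟨m, Or.inl ⟨rfl, ?_⟩⟩
      by_contra h
      push_neg at h
      have hy' : y ≠ (⌊y⌋ : ℝ) := hyi _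
      apply contra_helper (m : ℝ) y HR hy'
      have h1 : y < (m : ℝ) - 1 := by
        rcases lt_or_eq_of_le h with h' | h'
        · exact h'
        · exact absurd (by push_cast; linarith : y = ((m - 1 : ℤ) : ℝ)) (hyi _)
      have h2 : (⌊y⌋ : ℝ) ≤ y := Int.floor_le y
      linarith
  · push_neg at hxi
    by_cases hyi : ∃ m' : ℤ, y = (m' : ℝ)
    · obtain ⟨m', rfl⟩ := hyi
      refine Or.inr ⟨m', Or.inr ⟨rfl, ?_⟩⟩
      by_contra h
      push_neg at h
      have hx' : x ≠ (⌊x⌋ : ℝ) := hxi _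
      apply contra_helper (m' : ℝ) x HR' hx'
      have h1 : x < (m' : ℝ) - 1 := by
        rcases lt_or_eq_of_le h with h' | h'
        · exact h'
        · exact absurd (by push_cast; linarith : x = ((m' - 1 : ℤ) : ℝ)) (hxi _)
      have h2 : (⌊x⌋ : ℝ) ≤ x := Int.floor_le x
      linarith
    · push_neg at hyi
      have hx' : x ≠ (⌊x⌋ : ℝ) := hxi _
      have hy' : y ≠ (⌊y⌋ : ℝ) := hyi _
      have hxlt : (⌊x⌋ : ℝ) < x := lt_of_le_of_ne (Int.floor_le x) (Ne.symm hx')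
      have hylt : (⌊y⌋ : ℝ) < y := lt_of_le_of_ne (Int.floor_le y) (Ne.symm hy')
      have heq : ⌊x⌋ = ⌊y⌋ := by
        rcases lt_trichotomy ⌊x⌋ ⌊y⌋ with h | h | h
        · exfalso
          apply contra_helper y x HR' hx'
          have : (⌊x⌋ : ℝ) + 1 ≤ (⌊y⌋ : ℝ) := by exact_mod_cast h
          linarith
        · exact h
        · exfalso
          apply contra_helper x y HR hy'
          have : (⌊y⌋ : ℝ) + 1 ≤ (⌊x⌋ : ℝ) := by exact_mod_cast h
          linarith
      refine Or.inl ⟨⌊x⌋, hxlt, Int.lt_floor_add_one x, ?_, ?_⟩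
      · rw [heq]; exact hylt
      · rw [heq]; exact Int.lt_floor_add_one y

/-- Characterization of pairs `(z, z')` for which
`1/(Γ(z-k)Γ(z'-k))` is a nonnegative real number for every integer `k`. -/
theorem stmt_8 (z z' : ℂ) :
    (∀ k : ℤ, 0 ≤ ((Complex.Gamma (z - k) * Complex.Gamma (z' - k))⁻¹).re ∧
        ((Complex.Gamma (z - k) * Complex.Gamma (z' - k))⁻¹).im = 0) ↔
      ((z' = starRingEnd ℂ z ∧ z.im ≠ 0) ∨
        (z.im = 0 ∧ z'.im = 0 ∧
          ∃ m : ℤ, (m : ℝ) < z.re ∧ z.re < m + 1 ∧ (m : ℝ) < z'.re ∧ z'.re < m + 1) ∨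
        (∃ m : ℤ, (z = (m : ℂ) ∧ z'.im = 0 ∧ (m : ℝ) - 1 < z'.re) ∨
          (z' = (m : ℂ) ∧ z.im = 0 ∧ (m : ℝ) - 1 < z.re))) := by
  constructor
  · intro H
    have key : ∀ k : ℤ, (k : ℝ) + 1 < z.re → (k : ℝ) + 1 < z'.re →
        (z.re - ((k : ℝ) + 1)) * z'.im + z.im * (z'.re - ((k : ℝ) + 1)) = 0 := by
      intro k hk hk'
      have hre1 : 0 < (z - ((k : ℂ) + 1)).re := by
        simp only [Complex.sub_re, Complex.add_re, Complex.intCast_re, Complex.one_re]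
        linarith
      have hre1' : 0 < (z' - ((k : ℂ) + 1)).re := by
        simp only [Complex.sub_re, Complex.add_re, Complex.intCast_re, Complex.one_re]
        linarith
      have hre0 : 0 < (z - (k : ℂ)).re := by
        simp only [Complex.sub_re, Complex.intCast_re]; linarith
      have hre0' : 0 < (z' - (k : ℂ)).re := by
        simp only [Complex.sub_re, Complex.intCast_re]; linarith
      have hz1 : z - ((k : ℂ) + 1) ≠ 0 := by
        intro h; rw [h] at hre1; simp at hre1
      have hz1' : z' - ((k : ℂ) + 1) ≠ 0 := by
        intro h; rw [h] at hre1'; simp at hre1'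
      have hne1 : Complex.Gamma (z - k) ≠ 0 := Complex.Gamma_ne_zero_of_re_pos hre0
      have hne2 : Complex.Gamma (z' - k) ≠ 0 := Complex.Gamma_ne_zero_of_re_pos hre0'
      have hB1 : Complex.Gamma (z - ((k : ℂ) + 1)) ≠ 0 := Complex.Gamma_ne_zero_of_re_pos hre1
      have hB2 : Complex.Gamma (z' - ((k : ℂ) + 1)) ≠ 0 := Complex.Gamma_ne_zero_of_re_pos hre1'
      have hBne : Complex.Gamma (z - ((k : ℂ) + 1)) * Complex.Gamma (z' - ((k : ℂ) + 1)) ≠ 0 :=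
        mul_ne_zero hB1 hB2
      have e1 : Complex.Gamma (z - k) =
          (z - ((k : ℂ) + 1)) * Complex.Gamma (z - ((k : ℂ) + 1)) := by
        rw [show z - (k : ℂ) = z - ((k : ℂ) + 1) + 1 by ring]
        exact Complex.Gamma_add_one _ hz1
      have e2 : Complex.Gamma (z' - k) =
          (z' - ((k : ℂ) + 1)) * Complex.Gamma (z' - ((k : ℂ) + 1)) := by
        rw [show z' - (k : ℂ) = z' - ((k : ℂ) + 1) + 1 by ring]
        exact Complex.Gamma_add_one _ hz1'
      obtain ⟨hr0, hi0⟩ := H k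
      obtain ⟨hr1, hi1⟩ := H (k + 1)
      push_cast at hr1 hi1
      have hAB : Complex.Gamma (z - k) * Complex.Gamma (z' - k) =
          ((z - ((k : ℂ) + 1)) * (z' - ((k : ℂ) + 1))) *
            (Complex.Gamma (z - ((k : ℂ) + 1)) * Complex.Gamma (z' - ((k : ℂ) + 1))) := by
        rw [e1, e2]; ring
      have hAinv : (Complex.Gamma (z - k) * Complex.Gamma (z' - k))⁻¹ =
          (((Complex.Gamma (z - k) * Complex.Gamma (z' - k))⁻¹).re : ℂ) :=
        Complex.ext (Complex.ofReal_re _).symm (by rw [Complex.ofReal_im, hi0])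
      have hBinv : (Complex.Gamma (z - ((k : ℂ) + 1)) * Complex.Gamma (z' - ((k : ℂ) + 1)))⁻¹ =
          (((Complex.Gamma (z - ((k : ℂ) + 1)) *
            Complex.Gamma (z' - ((k : ℂ) + 1)))⁻¹).re : ℂ) :=
        Complex.ext (Complex.ofReal_re _).symm (by rw [Complex.ofReal_im, hi1])
      have hgAB : (z - ((k : ℂ) + 1)) * (z' - ((k : ℂ) + 1)) =
          (Complex.Gamma (z - k) * Complex.Gamma (z' - k)) *
            (Complex.Gamma (z - ((k : ℂ) + 1)) * Complex.Gamma (z' - ((k : ℂ) + 1)))⁻¹ := by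
        rw [hAB, mul_assoc, mul_inv_cancel₀ hBne, mul_one]
      have him : ((z - ((k : ℂ) + 1)) * (z' - ((k : ℂ) + 1))).im = 0 := by
        rw [hgAB, show Complex.Gamma (z - k) * Complex.Gamma (z' - k) =
            ((((Complex.Gamma (z - k) * Complex.Gamma (z' - k))⁻¹).re : ℝ) : ℂ)⁻¹ by
          rw [← hAinv, inv_inv], hBinv, ← Complex.ofReal_inv, ← Complex.ofReal_mul,
          Complex.ofReal_im]
      simpa [Complex.mul_im, Complex.sub_re, Complex.sub_im, Complex.add_re, Complex.add_im,
        Complex.intCast_re, Complex.intCast_im, Complex.one_re, Complex.one_im] using him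
    obtain ⟨k₀, hk₀⟩ := exists_int_lt (min z.re z'.re - 2)
    have hk1 : (k₀ : ℝ) < z.re - 2 :=
      lt_of_lt_of_le hk₀ (by gcongr; exact min_le_left _ _)
    have hk2 : (k₀ : ℝ) < z'.re - 2 :=
      lt_of_lt_of_le hk₀ (by gcongr; exact min_le_right _ _)
    have e1 := key k₀ (by linarith) (by linarith)
    have e2 := key (k₀ + 1) (by push_cast; linarith) (by push_cast; linarith)
    push_cast at e2
    have hsum : z.im + z'.im = 0 := by nlinarith [e1, e2]
    have hb : z'.im = -z.im := by linarith
    have hxy : z.im * (z'.re - z.re) = 0 := by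
      rw [hb] at e1
      ring_nf at e1 ⊢
      linarith
    rcases eq_or_ne z.im 0 with ha | ha
    · -- both real
      right
      have hb0 : z'.im = 0 := by rw [hb, ha, neg_zero]
      have HR : ∀ k : ℤ, 0 ≤ Real.Gamma (z.re - k) * Real.Gamma (z'.re - k) := by
        intro k
        have h := (H k).1
        have hgz : Complex.Gamma (z - k) = ((Real.Gamma (z.re - k) : ℝ) : ℂ) := by
          rw [show z - (k : ℂ) = ((z.re - (k : ℝ) : ℝ) : ℂ) from
            Complex.ext (by simp) (by simp [ha]), Complex.Gamma_ofReal]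
        have hgz' : Complex.Gamma (z' - k) = ((Real.Gamma (z'.re - k) : ℝ) : ℂ) := by
          rw [show z' - (k : ℂ) = ((z'.re - (k : ℝ) : ℝ) : ℂ) from
            Complex.ext (by simp) (by simp [hb0]), Complex.Gamma_ofReal]
        rw [hgz, hgz', ← Complex.ofReal_mul, ← Complex.ofReal_inv, Complex.ofReal_re] at h
        exact inv_nonneg.mp h
      rcases real_forward z.re z'.re HR with ⟨m, h1, h2, h3, h4⟩ | ⟨m, ⟨hxm, hym⟩ | ⟨hym, hxm⟩⟩
      · exact Or.inl ⟨ha, hb0, m, h1, h2, h3, h4⟩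
      · exact Or.inr ⟨m, Or.inl ⟨Complex.ext (by simp [hxm]) (by simp [ha]), hb0, hym⟩⟩
      · exact Or.inr ⟨m, Or.inr ⟨Complex.ext (by simp [hym]) (by simp [hb0]), ha, hxm⟩⟩
    · -- conjugate case
      left
      have hre : z'.re = z.re := by
        rcases mul_eq_zero.mp hxy with h | h
        · exact absurd h ha
        · linarith
      exact ⟨Complex.ext (by simp [hre]) (by simp [hb]), ha⟩
  · rintro (⟨rfl, hz⟩ | ⟨ha, hb, m, h1, h2, h3, h4⟩ | ⟨m, ⟨rfl, hb, hy⟩ | ⟨rfl, ha, hx⟩⟩)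
    · intro k
      have hc : Complex.Gamma (starRingEnd ℂ z - k) =
          starRingEnd ℂ (Complex.Gamma (z - k)) := by
        rw [show starRingEnd ℂ z - (k : ℂ) = starRingEnd ℂ (z - k) by
          rw [map_sub]; simp, Complex.Gamma_conj]
      rw [hc, Complex.mul_conj, ← Complex.ofReal_inv]
      exact ⟨by rw [Complex.ofReal_re]; exact inv_nonneg.mpr (Complex.normSq_nonneg _),
        Complex.ofReal_im _⟩
    · intro k
      have hgz : Complex.Gamma (z - k) = ((Real.Gamma (z.re - k) : ℝ) : ℂ) := by
        rw [show z - (k : ℂ) = ((z.re - (k : ℝ) : ℝ) : ℂ) from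
          Complex.ext (by simp) (by simp [ha]), Complex.Gamma_ofReal]
      have hgz' : Complex.Gamma (z' - k) = ((Real.Gamma (z'.re - k) : ℝ) : ℂ) := by
        rw [show z' - (k : ℂ) = ((z'.re - (k : ℝ) : ℝ) : ℂ) from
          Complex.ext (by simp) (by simp [hb]), Complex.Gamma_ofReal]
      rw [hgz, hgz', ← Complex.ofReal_mul, ← Complex.ofReal_inv]
      refine ⟨?_, Complex.ofReal_im _⟩
      rw [Complex.ofReal_re]
      refine inv_nonneg.mpr (le_of_lt ?_)
      exact gamma_prod_pos_aux (m - k) _ _ (by push_cast; linarith) (by push_cast; linarith)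
        (by push_cast; linarith) (by push_cast; linarith)
    · intro k
      have hgz : Complex.Gamma ((m : ℂ) - k) = ((Real.Gamma ((m : ℝ) - k) : ℝ) : ℂ) := by
        rw [show (m : ℂ) - (k : ℂ) = (((m : ℝ) - (k : ℝ) : ℝ) : ℂ) by push_cast; ring,
          Complex.Gamma_ofReal]
      have hgz' : Complex.Gamma (z' - k) = ((Real.Gamma (z'.re - k) : ℝ) : ℂ) := by
        rw [show z' - (k : ℂ) = ((z'.re - (k : ℝ) : ℝ) : ℂ) from
          Complex.ext (by simp) (by simp [hb]), Complex.Gamma_ofReal]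
      rw [hgz, hgz', ← Complex.ofReal_mul, ← Complex.ofReal_inv]
      refine ⟨?_, Complex.ofReal_im _⟩
      rw [Complex.ofReal_re]
      apply inv_nonneg.mpr
      rcases lt_or_ge k m with hk | hk
      · have hk' : (k : ℝ) ≤ (m : ℝ) - 1 := by
          have : (k : ℝ) + 1 ≤ m := by exact_mod_cast hk
          linarith
        exact le_of_lt (mul_pos (Real.Gamma_pos_of_pos (by linarith))
          (Real.Gamma_pos_of_pos (by linarith)))
      · have hcast : (((k - m).toNat : ℕ) : ℝ) = ((k - m : ℤ) : ℝ) := by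
          exact_mod_cast Int.toNat_of_nonneg (show (0 : ℤ) ≤ k - m by omega)
        have hz0 : (m : ℝ) - k = -(((k - m).toNat : ℕ) : ℝ) := by
          rw [hcast]; push_cast; ring
        rw [hz0, Real.Gamma_neg_nat_eq_zero, zero_mul]
    · intro k
      have hgz' : Complex.Gamma ((m : ℂ) - k) = ((Real.Gamma ((m : ℝ) - k) : ℝ) : ℂ) := by
        rw [show (m : ℂ) - (k : ℂ) = (((m : ℝ) - (k : ℝ) : ℝ) : ℂ) by push_cast; ring,
          Complex.Gamma_ofReal]
      have hgz : Complex.Gamma (z - k) = ((Real.Gamma (z.re - k) : ℝ) : ℂ) := by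
        rw [show z - (k : ℂ) = ((z.re - (k : ℝ) : ℝ) : ℂ) from
          Complex.ext (by simp) (by simp [ha]), Complex.Gamma_ofReal]
      rw [hgz, hgz', ← Complex.ofReal_mul, ← Complex.ofReal_inv]
      refine ⟨?_, Complex.ofReal_im _⟩
      rw [Complex.ofReal_re]
      apply inv_nonneg.mpr
      rcases lt_or_ge k m with hk | hk
      · have hk' : (k : ℝ) ≤ (m : ℝ) - 1 := by
          have : (k : ℝ) + 1 ≤ m := by exact_mod_cast hk
          linarith
        exact le_of_lt (mul_pos (Real.Gamma_pos_of_pos (by linarith))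
          (Real.Gamma_pos_of_pos (by linarith)))
      · have hcast : (((k - m).toNat : ℕ) : ℝ) = ((k - m : ℤ) : ℝ) := by
          exact_mod_cast Int.toNat_of_nonneg (show (0 : ℤ) ≤ k - m by omega)
        have hz0 : (m : ℝ) - k = -(((k - m).toNat : ℕ) : ℝ) := by
          rw [hcast]; push_cast; ring
        rw [hz0, Real.Gamma_neg_nat_eq_zero, mul_zero]
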